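/- arXiv:1911.12452 — 2 statements merged into one kernel-verified Lean document; each statement's English description precedes it below -/
import Mathlib

section
/- Fix positive reals s₁ < ⋯ < s_N and positive reals c₁,…,c_N, and g(λ) = Σᵢ sᵢcᵢ/(λ − sᵢ)². If K > 0 is smaller than the infimum of g over the set (s₁, s_N) \ {s₂,…,s_{N−1}}, then the equation g(λ) = K has exactly 2 real solutions, one in (−∞, s₁) and one in (s_N, ∞). -/
lemma key_aux (N : ℕ) (hN : 0 < N) (t a : Fin N → ℝ) (ha : ∀ i, 0 < a i)
    (T : ℝ) (hT : ∀ i, T ≤ t i) (i0 : Fin N) (hi0 : t i0 = T) (K : ℝ) (hK : 0 < K) :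
    ∃! lam : ℝ, lam < T ∧ (∑ i, a i / (lam - t i)^2) = K := by
  haveI : Nonempty (Fin N) := ⟨⟨0, hN⟩⟩
  set f : ℝ → ℝ := fun lam => ∑ i, a i / (lam - t i)^2 with hf
  have hmono : StrictMonoOn f (Set.Iio T) := by
    intro x hx y hy hxy
    apply Finset.sum_lt_sum_of_nonempty Finset.univ_nonempty
    intro i _
    have h1 : (0:ℝ) < t i - y := sub_pos.2 (lt_of_lt_of_le hy (hT i))
    have h2 : t i - y < t i - x := by linarith
    have hsq : (y - t i)^2 < (x - t i)^2 := by nlinarith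
    have hypos : 0 < (y - t i)^2 := by nlinarith
    exact div_lt_div_of_pos_left (ha i) hypos hsq
  have hcont : ContinuousOn f (Set.Iio T) := by
    apply continuousOn_finset_sum
    intro i _
    apply ContinuousOn.div continuousOn_const
    · exact ((continuousOn_id.sub continuousOn_const).pow 2)
    · intro x hx
      exact pow_ne_zero _ (sub_ne_zero.2 (ne_of_lt (lt_of_lt_of_le hx (hT i))))
  set M : ℝ := ∑ i, a i with hM
  have hMpos : 0 < M := Finset.sum_pos (fun i _ => ha i) Finset.univ_nonempty
  have hMK : 0 ≤ M / K := le_of_lt (div_pos hMpos hK)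
  have haK : 0 < a i0 / K := div_pos (ha i0) hK
  set A : ℝ := T - 1 - Real.sqrt (M / K) with hA
  set ε : ℝ := min 1 (Real.sqrt (a i0 / K) / 2) with hε
  have hεpos : 0 < ε := lt_min one_pos (by positivity)
  set B : ℝ := T - ε with hB
  have hAB : A < B := by
    have h0 : Real.sqrt (M / K) > 0 := Real.sqrt_pos.2 (div_pos hMpos hK)
    have h1 : ε ≤ 1 := min_le_left _ _
    simp only [hA, hB]; linarith
  have hBT : B < T := by simp only [hB]; linarith
  have hAT : A < T := lt_trans hAB hBT
  have hfA : f A < K := by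
    have hTA : 0 < T - A := by linarith
    have hstep : f A ≤ M / (T - A)^2 := by
      rw [hM, Finset.sum_div]
      apply Finset.sum_le_sum
      intro i _
      have h1 : T - A ≤ t i - A := by have := hT i; linarith
      have hsq : (T - A)^2 ≤ (A - t i)^2 := by nlinarith
      exact div_le_div_of_nonneg_left (le_of_lt (ha i))
        (pow_pos hTA 2) hsq
    have hlt : M / (T - A)^2 < K := by
      rw [div_lt_iff₀ (by positivity)]
      have hsqrt : Real.sqrt (M / K) ^ 2 = M / K := Real.sq_sqrt hMK
      have hge : (T - A) ^ 2 > M / K := by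
        have hTAe : T - A = 1 + Real.sqrt (M / K) := by rw [hA]; ring
        rw [hTAe]
        nlinarith [Real.sqrt_nonneg (M / K)]
      have h5 : M < (T - A)^2 * K := (div_lt_iff₀ hK).mp hge
      nlinarith
    linarith
  have hfB : K < f B := by
    have hterm : a i0 / (B - t i0)^2 ≤ f B :=
      Finset.single_le_sum (f := fun i => a i / (B - t i)^2)
        (fun i _ => div_nonneg (le_of_lt (ha i)) (sq_nonneg _)) (Finset.mem_univ i0)
    have hε2 : ε^2 < a i0 / K := by
      have h1 : ε ≤ Real.sqrt (a i0 / K) / 2 := min_le_right _ _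
      have h2 : (Real.sqrt (a i0 / K) / 2)^2 = (a i0 / K) / 4 := by
        rw [div_pow, Real.sq_sqrt (le_of_lt haK)]; ring
      nlinarith
    have hBt : (B - t i0)^2 = ε^2 := by rw [hi0, hB]; ring
    have : K < a i0 / (B - t i0)^2 := by
      rw [hBt, lt_div_iff₀ (by positivity)]
      have h6 : ε^2 * K < a i0 := (lt_div_iff₀ hK).mp hε2
      nlinarith
    linarith
  have hsub : Set.Icc A B ⊆ Set.Iio T := fun x hx => lt_of_le_of_lt hx.2 hBT
  have hIVT := intermediate_value_Icc (le_of_lt hAB) (hcont.mono hsub)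
  obtain ⟨x, hxmem, hx⟩ := hIVT ⟨le_of_lt hfA, le_of_lt hfB⟩
  have hxT : x < T := lt_of_le_of_lt hxmem.2 hBT
  refine ⟨x, ⟨hxT, hx⟩, ?_⟩
  rintro y ⟨hyT, hy⟩
  have hx' : (∑ i, a i / (x - t i)^2) = K := hx
  exact hmono.injOn hyT hxT (hy.trans hx'.symm)

theorem stmt_8 (N : ℕ) (hN : 0 < N) (s c : Fin N → ℝ) (hs : StrictMono s)
    (hspos : ∀ i, 0 < s i) (hc : ∀ i, 0 < c i) (K : ℝ) (hK : 0 < K)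
    (hKsmall : ∀ lam ∈ Set.Ioo (s ⟨0, hN⟩) (s ⟨N - 1, by omega⟩),
      (∀ i, lam ≠ s i) → K < ∑ i, s i * c i / (lam - s i)^2) :
    (∃! lam : ℝ, lam < s ⟨0, hN⟩ ∧ (∑ i, s i * c i / (lam - s i)^2) = K) ∧
    (∃! lam : ℝ, s ⟨N - 1, by omega⟩ < lam ∧ (∑ i, s i * c i / (lam - s i)^2) = K) ∧
    (∀ lam : ℝ, (∀ i, lam ≠ s i) → (∑ i, s i * c i / (lam - s i)^2) = K →
      lam < s ⟨0, hN⟩ ∨ s ⟨N - 1, by omega⟩ < lam) := by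
  have ha : ∀ i, 0 < s i * c i := fun i => mul_pos (hspos i) (hc i)
  refine ⟨?_, ?_, ?_⟩
  · exact key_aux N hN s (fun i => s i * c i) ha (s ⟨0, hN⟩)
      (fun i => hs.monotone (Fin.le_def.mpr (Nat.zero_le _))) ⟨0, hN⟩ rfl K hK
  · have h2 := key_aux N hN (fun i => -s i) (fun i => s i * c i) ha
      (-s ⟨N - 1, by omega⟩)
      (fun i => neg_le_neg (hs.monotone (Fin.le_def.mpr (show i.1 ≤ N - 1 by
        have := i.isLt; omega)))) ⟨N - 1, by omega⟩ rfl K hK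
    obtain ⟨x, ⟨hx1, hx2⟩, hxu⟩ := h2
    refine ⟨-x, ⟨by linarith, ?_⟩, ?_⟩
    · rw [← hx2]
      exact Finset.sum_congr rfl fun i _ => by congr 1; ring
    · rintro y ⟨hy1, hy2⟩
      have hyx : -y = x := by
        apply hxu
        refine ⟨by linarith, ?_⟩
        rw [← hy2]
        exact Finset.sum_congr rfl fun i _ => by congr 1; ring
      linarith
  · intro lam hne heq
    by_contra h
    push_neg at h
    obtain ⟨h1, h2⟩ := h
    have hlt := hKsmall lam ⟨lt_of_le_of_ne h1 (hne ⟨0, hN⟩).symm,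
      lt_of_le_of_ne h2 (hne ⟨N - 1, by omega⟩)⟩ hne
    rw [heq] at hlt
    exact lt_irrefl K hlt
end

section
/- Let A be an M×N real matrix, b ∈ ℝ^M, and suppose λ₁ < λ₂ are reals not in the spectrum of AᵀA, with xᵢ = (AᵀA − λᵢI)⁻¹Aᵀb for i = 1,2 both satisfying ‖x₁‖ = ‖x₂‖. Then H(x₁) ≤ H(x₂), where H(x) = (1/2)‖Ax − b‖². -/
open Matrix

theorem stmt_9 (M N : ℕ) (A : Matrix (Fin M) (Fin N) ℝ) (b : Fin M → ℝ)
    (lam₁ lam₂ : ℝ) (hlt : lam₁ < lam₂)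
    (h₁ : IsUnit (Aᵀ * A - lam₁ • (1 : Matrix (Fin N) (Fin N) ℝ)))
    (h₂ : IsUnit (Aᵀ * A - lam₂ • (1 : Matrix (Fin N) (Fin N) ℝ)))
    (x₁ x₂ : Fin N → ℝ)
    (hx₁ : x₁ = (Aᵀ * A - lam₁ • (1 : Matrix (Fin N) (Fin N) ℝ))⁻¹.mulVec (Aᵀ.mulVec b))
    (hx₂ : x₂ = (Aᵀ * A - lam₂ • (1 : Matrix (Fin N) (Fin N) ℝ))⁻¹.mulVec (Aᵀ.mulVec b))
    (hnorm : x₁ ⬝ᵥ x₁ = x₂ ⬝ᵥ x₂) :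
    (1/2) * ((A.mulVec x₁ - b) ⬝ᵥ (A.mulVec x₁ - b)) ≤
      (1/2) * ((A.mulVec x₂ - b) ⬝ᵥ (A.mulVec x₂ - b)) := by
  set B := Aᵀ * A with hB
  set c := Aᵀ.mulVec b with hc
  -- recover the linear equations
  have key : ∀ (lam : ℝ) (x : Fin N → ℝ), IsUnit (B - lam • (1 : Matrix (Fin N) (Fin N) ℝ)) →
      x = (B - lam • (1 : Matrix (Fin N) (Fin N) ℝ))⁻¹.mulVec c →
      B.mulVec x = lam • x + c := by
    intro lam x hu hx
    have hdet : IsUnit (B - lam • (1 : Matrix (Fin N) (Fin N) ℝ)).det :=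
      (Matrix.isUnit_iff_isUnit_det _).mp hu
    have : (B - lam • (1 : Matrix (Fin N) (Fin N) ℝ)).mulVec x = c := by
      rw [hx, Matrix.mulVec_mulVec, Matrix.mul_nonsing_inv _ hdet, Matrix.one_mulVec]
    rw [Matrix.sub_mulVec, Matrix.smul_mulVec, Matrix.one_mulVec] at this
    have := sub_eq_iff_eq_add.mp this
    rw [this, add_comm]
  have heq₁ : B.mulVec x₁ = lam₁ • x₁ + c := key lam₁ x₁ h₁ hx₁
  have heq₂ : B.mulVec x₂ = lam₂ • x₂ + c := key lam₂ x₂ h₂ hx₂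
  -- symmetry: u ⬝ᵥ B.mulVec w = A.mulVec u ⬝ᵥ A.mulVec w
  have hsym : ∀ u w : Fin N → ℝ, u ⬝ᵥ B.mulVec w = A.mulVec u ⬝ᵥ A.mulVec w := by
    intro u w
    rw [hB, ← Matrix.mulVec_mulVec, Matrix.dotProduct_mulVec, Matrix.vecMul_transpose]
  -- ‖Ax − b‖² expansion
  have expand : ∀ (lam : ℝ) (x : Fin N → ℝ), B.mulVec x = lam • x + c →
      (A.mulVec x - b) ⬝ᵥ (A.mulVec x - b) =
        lam * (x ⬝ᵥ x) - x ⬝ᵥ c + b ⬝ᵥ b := by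
    intro lam x h
    have h1 : A.mulVec x ⬝ᵥ A.mulVec x = lam * (x ⬝ᵥ x) + x ⬝ᵥ c := by
      rw [← hsym, h, dotProduct_add, dotProduct_smul, smul_eq_mul]
    have h2 : A.mulVec x ⬝ᵥ b = x ⬝ᵥ c := by
      rw [hc, Matrix.dotProduct_mulVec, Matrix.vecMul_transpose]
    have h3 : b ⬝ᵥ A.mulVec x = x ⬝ᵥ c := by rw [dotProduct_comm]; exact h2
    simp only [dotProduct_sub, sub_dotProduct, h1, h2, h3]
    ring
  rw [expand lam₁ x₁ heq₁, expand lam₂ x₂ heq₂]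
  -- cross terms
  have hc₁ : x₁ ⬝ᵥ c = A.mulVec x₁ ⬝ᵥ A.mulVec x₂ - lam₂ * (x₁ ⬝ᵥ x₂) := by
    have := hsym x₁ x₂
    rw [heq₂, dotProduct_add, dotProduct_smul, smul_eq_mul] at this
    linarith
  have hc₂ : x₂ ⬝ᵥ c = A.mulVec x₂ ⬝ᵥ A.mulVec x₁ - lam₁ * (x₂ ⬝ᵥ x₁) := by
    have := hsym x₂ x₁
    rw [heq₁, dotProduct_add, dotProduct_smul, smul_eq_mul] at this
    linarith
  have hcomm : A.mulVec x₂ ⬝ᵥ A.mulVec x₁ = A.mulVec x₁ ⬝ᵥ A.mulVec x₂ := dotProduct_comm _ _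
  have hcomm' : x₂ ⬝ᵥ x₁ = x₁ ⬝ᵥ x₂ := dotProduct_comm _ _
  have hCS : 2 * (x₁ ⬝ᵥ x₂) ≤ x₁ ⬝ᵥ x₁ + x₂ ⬝ᵥ x₂ := by
    have h0 : 0 ≤ (x₁ - x₂) ⬝ᵥ (x₁ - x₂) := by
      apply Finset.sum_nonneg
      intro i _
      exact mul_self_nonneg _
    rw [dotProduct_sub, sub_dotProduct, sub_dotProduct, hcomm'] at h0
    linarith
  have hkey : x₂ ⬝ᵥ c - x₁ ⬝ᵥ c ≤ lam₂ * (x₂ ⬝ᵥ x₂) - lam₁ * (x₁ ⬝ᵥ x₁) := by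
    rw [hc₁, hc₂, hcomm, hcomm', hnorm]
    nlinarith [mul_le_mul_of_nonneg_left hCS (le_of_lt (sub_pos.mpr hlt)), hnorm]
  linarith
end
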